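/- If the data distribution is supported on a linear subspace, i.e., x_0 = A z with A ∈ ℝ^{D×d} having orthonormal columns and z ~ P_z on ℝ^d, then the score of the forward process decomposes orthogonally as ∇ log p_t(x) = A ∇ log p_t^{ld}(A^⊤ x) − (1/(1−e^{−t})) (I − A A^⊤) x, where p_t^{ld} is the marginal density of the forward process applied to the latent variable z. -/

import Mathlib

/-!
STATEMENT 5: If the data distribution is supported on a linear subspace, x₀ = A z with
A having orthonormal columns (formalized: A is a linear isometry ℝ^d → ℝ^D) and z ~ P_z,
then the score of the OU forward process decomposes orthogonally as
∇log p_t(x) = A ∇log p_t^{ld}(Aᵀx) − (1/(1−e^{−t})) (I − AAᵀ) x,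
where p_t^{ld} is the marginal density of the forward process applied to z.
-/

open MeasureTheory

noncomputable def gaussKernel' (n : ℕ) (α h : ℝ)
    (x₀ x : EuclideanSpace ℝ (Fin n)) : ℝ :=
  (Real.sqrt ((2 * Real.pi * h) ^ n))⁻¹ * Real.exp (-‖x - α • x₀‖ ^ 2 / (2 * h))

section Aux

local notation "𝔼" n => EuclideanSpace ℝ (Fin n)

/-- normalization constant -/
noncomputable def gaussC (n : ℕ) (h : ℝ) : ℝ := (Real.sqrt ((2 * Real.pi * h) ^ n))⁻¹

lemma gaussC_pos (n : ℕ) {h : ℝ} (hh : 0 < h) : 0 < gaussC n h := by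
  have : (0:ℝ) < 2 * Real.pi * h := by positivity
  have := Real.sqrt_pos.2 (pow_pos this n)
  exact inv_pos.2 this

lemma gaussKernel'_eq (n : ℕ) (α h : ℝ) (x₀ x : EuclideanSpace ℝ (Fin n)) :
    gaussKernel' n α h x₀ x = gaussC n h * Real.exp (-‖x - α • x₀‖ ^ 2 / (2 * h)) := rfl

lemma gaussKernel'_pos (n : ℕ) (α : ℝ) {h : ℝ} (hh : 0 < h)
    (x₀ x : EuclideanSpace ℝ (Fin n)) : 0 < gaussKernel' n α h x₀ x :=
  mul_pos (gaussC_pos n hh) (Real.exp_pos _)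

lemma gaussKernel'_le (n : ℕ) (α : ℝ) {h : ℝ} (hh : 0 < h)
    (x₀ x : EuclideanSpace ℝ (Fin n)) : gaussKernel' n α h x₀ x ≤ gaussC n h := by
  rw [gaussKernel'_eq]
  nth_rewrite 2 [show gaussC n h = gaussC n h * 1 by ring]
  refine mul_le_mul_of_nonneg_left ?_ (gaussC_pos n hh).le
  rw [Real.exp_le_one_iff]
  have : (0:ℝ) ≤ ‖x - α • x₀‖ ^ 2 := by positivity
  have h2 : (0:ℝ) < 2 * h := by linarith
  exact div_nonpos_of_nonpos_of_nonneg (by linarith) h2.le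

lemma gaussKernel'_continuous (n : ℕ) (α h : ℝ) (x : EuclideanSpace ℝ (Fin n)) :
    Continuous fun z : EuclideanSpace ℝ (Fin n) => gaussKernel' n α h z x := by
  unfold gaussKernel'
  fun_prop

/-- the elementary bound `r * exp (-r^2/(2h)) ≤ √h`. -/
lemma mul_exp_le_sqrt {h : ℝ} (hh : 0 < h) {r : ℝ} (hr : 0 ≤ r) :
    r * Real.exp (-r ^ 2 / (2 * h)) ≤ Real.sqrt h := by
  have hs : 0 < Real.sqrt h := Real.sqrt_pos.2 hh
  have hs2 : Real.sqrt h * Real.sqrt h = h := Real.mul_self_sqrt hh.le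
  have hexp : 1 + r ^ 2 / (2 * h) ≤ Real.exp (r ^ 2 / (2 * h)) :=
    Real.add_one_le_exp _ |>.trans_eq' (by ring_nf)
  have h2h : (0:ℝ) < 2 * h := by linarith
  have key : r ≤ Real.sqrt h * Real.exp (r ^ 2 / (2 * h)) := by
    have h1 : Real.sqrt h * (1 + r ^ 2 / (2 * h)) ≤
        Real.sqrt h * Real.exp (r ^ 2 / (2 * h)) :=
      mul_le_mul_of_nonneg_left hexp hs.le
    refine le_trans ?_ h1
    have main : r * (2 * h) ≤ (Real.sqrt h * (1 + r ^ 2 / (2 * h))) * (2 * h) := by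
      have expand : (Real.sqrt h * (1 + r ^ 2 / (2 * h))) * (2 * h)
          = 2 * h * Real.sqrt h + Real.sqrt h * r ^ 2 := by
        field_simp
      rw [expand]
      nlinarith [mul_nonneg hs.le (sq_nonneg (r - Real.sqrt h))]
    exact le_of_mul_le_mul_right main h2h
  have hneg : -r ^ 2 / (2 * h) = -(r ^ 2 / (2 * h)) := by ring
  rw [hneg, Real.exp_neg]
  rw [mul_inv_le_iff₀ (Real.exp_pos _)]
  calc r ≤ Real.sqrt h * Real.exp (r ^ 2 / (2 * h)) := key
  _ = _ := by ring

lemma gauss_hasFDerivAt (n : ℕ) (α : ℝ) {h : ℝ} (hh : 0 < h)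
    (x₀ x : EuclideanSpace ℝ (Fin n)) :
    HasFDerivAt (fun y => gaussKernel' n α h x₀ y)
      ((-h⁻¹ * gaussKernel' n α h x₀ x) • (innerSL ℝ (x - α • x₀))) x := by
  have hid : HasFDerivAt (fun y : EuclideanSpace ℝ (Fin n) => y - α • x₀)
      (ContinuousLinearMap.id ℝ _) x := (hasFDerivAt_id x).sub_const _
  have hinner := hid.inner ℝ hid
  have hq : HasFDerivAt
      (fun y : EuclideanSpace ℝ (Fin n) =>
        -(2 * h)⁻¹ * inner ℝ (y - α • x₀) (y - α • x₀) + 0)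
      ((-(2 * h)⁻¹) • ((fderivInnerCLM ℝ (x - α • x₀, x - α • x₀)).comp
        ((ContinuousLinearMap.id ℝ _).prod (ContinuousLinearMap.id ℝ _)))) x :=
    (hinner.const_mul _).add_const 0
  have hexp := hq.exp
  have hconst := hexp.const_mul (gaussC n h)
  have hfun : (fun y => gaussKernel' n α h x₀ y) =
      fun y : EuclideanSpace ℝ (Fin n) => gaussC n h *
        Real.exp (-(2 * h)⁻¹ * inner ℝ (y - α • x₀) (y - α • x₀) + 0) := by
    funext y
    rw [gaussKernel'_eq, real_inner_self_eq_norm_sq]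
    ring_nf
  rw [hfun]
  refine hconst.congr_fderiv ?_
  ext v
  simp only [ContinuousLinearMap.coe_smul', Pi.smul_apply, innerSL_apply_apply,
    ContinuousLinearMap.coe_comp', Function.comp_apply,
    ContinuousLinearMap.prod_apply, ContinuousLinearMap.coe_id', id_eq,
    fderivInnerCLM_apply, smul_eq_mul, gaussKernel'_eq, real_inner_self_eq_norm_sq]
  rw [real_inner_comm (x - α • x₀) v]
  ring_nf

end Aux

set_option maxHeartbeats 1000000 in
set_option synthInstance.maxHeartbeats 400000 in
theorem score_decomposition_subspace
    (D d : ℕ)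
    (A : EuclideanSpace ℝ (Fin d) →ₗᵢ[ℝ] EuclideanSpace ℝ (Fin D))
    (Pz : Measure (EuclideanSpace ℝ (Fin d))) [IsProbabilityMeasure Pz]
    (t : ℝ) (ht : 0 < t)
    (α h : ℝ) (hα : α = Real.exp (-t / 2)) (hh : h = 1 - Real.exp (-t))
    -- ambient-space marginal density of the forward process from P_data = A_* P_z
    (p : EuclideanSpace ℝ (Fin D) → ℝ)
    (hp : ∀ x, p x = ∫ z, gaussKernel' D α h (A z) x ∂Pz)
    -- latent (low-dimensional) marginal density of the forward process from P_z
    (pld : EuclideanSpace ℝ (Fin d) → ℝ)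
    (hpld : ∀ u, pld u = ∫ z, gaussKernel' d α h z u ∂Pz)
    (x : EuclideanSpace ℝ (Fin D)) :
    gradient (fun y => Real.log (p y)) x
      = A (gradient (fun u => Real.log (pld u)) (LinearMap.adjoint A.toLinearMap x))
        - (1 / (1 - Real.exp (-t))) •
            (x - A (LinearMap.adjoint A.toLinearMap x)) := by
  have hhpos : 0 < h := by
    rw [hh]
    have : Real.exp (-t) < 1 := Real.exp_lt_one_iff.2 (by linarith)
    linarith
  set B := LinearMap.adjoint A.toLinearMap with hB
  -- basic adjoint facts
  have hBA : ∀ v, B (A v) = v := by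
    intro v
    apply ext_inner_right ℝ
    intro u
    rw [hB, LinearMap.adjoint_inner_left]
    exact A.inner_map_map v u
  have hGBv : ∀ (y : EuclideanSpace ℝ (Fin D)) (v : EuclideanSpace ℝ (Fin d)),
      (inner ℝ (A v) y : ℝ) = inner ℝ v (B y) := by
    intro y v
    exact (LinearMap.adjoint_inner_right A.toLinearMap v y).symm
  have hABy : ∀ (y : EuclideanSpace ℝ (Fin D)) (v : EuclideanSpace ℝ (Fin d)),
      (inner ℝ (A v) (y - A (B y)) : ℝ) = 0 := by
    intro y v
    rw [inner_sub_right, hGBv y v, A.inner_map_map, sub_self]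
  -- splitting of the squared norm
  have hsplit : ∀ (z : EuclideanSpace ℝ (Fin d)) (y : EuclideanSpace ℝ (Fin D)),
      ‖y - α • A z‖ ^ 2 = ‖B y - α • z‖ ^ 2 + ‖y - A (B y)‖ ^ 2 := by
    intro z y
    have hdecomp : y - α • A z = A (B y - α • z) + (y - A (B y)) := by
      rw [map_sub, _root_.map_smul]
      abel
    rw [hdecomp, @norm_add_sq_real, hABy y (B y - α • z), A.norm_map]
    ring
  -- factorization of the ambient kernel
  have hcd : gaussC d h ≠ 0 := (gaussC_pos d hhpos).ne'
  have hfact : ∀ (y : EuclideanSpace ℝ (Fin D)) (z : EuclideanSpace ℝ (Fin d)),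
      gaussKernel' D α h (A z) y
        = (gaussC D h / gaussC d h * Real.exp (-‖y - A (B y)‖ ^ 2 / (2 * h)))
          * gaussKernel' d α h z (B y) := by
    intro y z
    rw [gaussKernel'_eq, gaussKernel'_eq, hsplit z y,
      show (-(‖B y - α • z‖ ^ 2 + ‖y - A (B y)‖ ^ 2) / (2 * h))
          = (-‖y - A (B y)‖ ^ 2 / (2 * h)) + (-‖B y - α • z‖ ^ 2 / (2 * h)) by ring,
      Real.exp_add]
    field_simp
  -- factorization of the ambient density
  have hpfact : ∀ y, p y
      = (gaussC D h / gaussC d h * Real.exp (-‖y - A (B y)‖ ^ 2 / (2 * h)))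
        * pld (B y) := by
    intro y
    rw [hp, hpld]
    simp only [hfact y]
    rw [integral_const_mul]
  -- integrability and positivity of the latent density
  have hint : ∀ u, Integrable (fun z => gaussKernel' d α h z u) Pz := by
    intro u
    refine Integrable.mono' (integrable_const (gaussC d h))
      ((gaussKernel'_continuous d α h u).aestronglyMeasurable) ?_
    filter_upwards with z
    rw [Real.norm_of_nonneg (gaussKernel'_pos d α hhpos z u).le]
    exact gaussKernel'_le d α hhpos z u
  have hpldpos : ∀ u, 0 < pld u := by
    intro u
    rw [hpld]
    rw [integral_pos_iff_support_of_nonneg_ae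
      (Filter.Eventually.of_forall fun z => (gaussKernel'_pos d α hhpos z u).le) (hint u)]
    have hsupp : Function.support (fun z => gaussKernel' d α h z u) = Set.univ :=
      Set.eq_univ_iff_forall.2 fun z => (gaussKernel'_pos d α hhpos z u).ne'
    rw [hsupp, measure_univ]
    exact one_pos
  -- differentiability of the latent density at u₀ = B x
  set u₀ := B x with hu₀
  have hder : HasFDerivAt (fun u => ∫ z, gaussKernel' d α h z u ∂Pz)
      (∫ z, (-h⁻¹ * gaussKernel' d α h z u₀) • (innerSL ℝ (u₀ - α • z)) ∂Pz) u₀ := by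
    apply hasFDerivAt_integral_of_dominated_of_fderiv_le (s := Metric.ball u₀ 1)
      (bound := fun _ => gaussC d h * h⁻¹ * Real.sqrt h)
      (F' := fun u z => (-h⁻¹ * gaussKernel' d α h z u) • (innerSL ℝ (u - α • z)))
      (Metric.ball_mem_nhds u₀ one_pos)
    · filter_upwards with u
      exact (gaussKernel'_continuous d α h u).aestronglyMeasurable
    · exact hint u₀
    · refine Continuous.aestronglyMeasurable ?_
      refine Continuous.smul (f := fun z => -h⁻¹ * gaussKernel' d α h z u₀) (g := fun z => innerSL ℝ (u₀ - α • z)) ?_ ?_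
      · exact continuous_const.mul (gaussKernel'_continuous d α h u₀)
      · exact (innerSL ℝ).continuous.comp (by fun_prop)
    · filter_upwards with z
      intro u _
      have hgpos := gaussKernel'_pos d α hhpos z u
      have habs : ‖-h⁻¹ * gaussKernel' d α h z u‖
          = h⁻¹ * gaussKernel' d α h z u := by
        rw [show -h⁻¹ * gaussKernel' d α h z u = -(h⁻¹ * gaussKernel' d α h z u) by ring,
          Real.norm_eq_abs, abs_neg, abs_of_pos (by positivity)]
      refine le_trans (ContinuousLinearMap.opNorm_smul_le _ _) ?_
      rw [innerSL_apply_norm, habs]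
      calc h⁻¹ * gaussKernel' d α h z u * ‖u - α • z‖
          = h⁻¹ * gaussC d h * (‖u - α • z‖ * Real.exp (-‖u - α • z‖ ^ 2 / (2 * h))) := by
            rw [gaussKernel'_eq]; ring
        _ ≤ h⁻¹ * gaussC d h * Real.sqrt h := by
            refine mul_le_mul_of_nonneg_left (mul_exp_le_sqrt hhpos (norm_nonneg _)) ?_
            have := (gaussC_pos d hhpos).le
            positivity
        _ = gaussC d h * h⁻¹ * Real.sqrt h := by ring
    · exact integrable_const _
    · filter_upwards with z
      intro u _
      exact gauss_hasFDerivAt d α hhpos z u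
  have hpld_eq : pld = fun u => ∫ z, gaussKernel' d α h z u ∂Pz := funext hpld
  have hpldD : DifferentiableAt ℝ pld u₀ := by
    rw [hpld_eq]; exact hder.differentiableAt
  have hlogD : DifferentiableAt ℝ (fun u => Real.log (pld u)) u₀ :=
    hpldD.log (hpldpos u₀).ne'
  set G := gradient (fun u => Real.log (pld u)) u₀ with hGdef
  have hGf : HasFDerivAt (fun u => Real.log (pld u))
      (InnerProductSpace.toDual ℝ _ G) u₀ := hlogD.hasGradientAt
  -- continuous linear maps
  set B' : EuclideanSpace ℝ (Fin D) →L[ℝ] EuclideanSpace ℝ (Fin d) :=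
    LinearMap.toContinuousLinearMap B with hB'
  have hB'app : ∀ y, B' y = B y := fun y => rfl
  set R : EuclideanSpace ℝ (Fin D) →L[ℝ] EuclideanSpace ℝ (Fin D) :=
    ContinuousLinearMap.id ℝ _ - (A.toContinuousLinearMap.comp B') with hR
  have hRy : ∀ y, y - A (B y) = R y := by
    intro y
    simp [hR, hB'app]
  -- derivative of the quadratic part
  have base : HasFDerivAt
      (fun y : EuclideanSpace ℝ (Fin D) => (inner ℝ (R y) (R y) : ℝ))
      ((fderivInnerCLM ℝ (R x, R x)).comp (R.prod R)) x :=
    (R.hasFDerivAt).inner ℝ (R.hasFDerivAt)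
  have H1 : HasFDerivAt
      (fun y : EuclideanSpace ℝ (Fin D) =>
        Real.log (gaussC D h / gaussC d h) + -(2 * h)⁻¹ * (inner ℝ (R y) (R y) : ℝ))
      ((-(2 * h)⁻¹) • ((fderivInnerCLM ℝ (R x, R x)).comp (R.prod R))) x := by
    simpa [add_comm] using (base.const_mul (-(2 * h)⁻¹)).add_const
      (Real.log (gaussC D h / gaussC d h))
  have H2 : HasFDerivAt (fun y => Real.log (pld (B' y)))
      ((InnerProductSpace.toDual ℝ _ G).comp B') x :=
    by have := hGf.comp x (B'.hasFDerivAt); exact this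
  have Htot := H1.add H2
  -- rewrite log p as the sum
  have hfunc : (fun y => Real.log (p y))
      = fun y : EuclideanSpace ℝ (Fin D) =>
          (Real.log (gaussC D h / gaussC d h)
            + -(2 * h)⁻¹ * (inner ℝ (R y) (R y) : ℝ))
          + Real.log (pld (B' y)) := by
    funext y
    have hK : gaussC D h / gaussC d h ≠ 0 :=
      div_ne_zero (gaussC_pos D hhpos).ne' hcd
    rw [hpfact y, Real.log_mul (mul_ne_zero hK (Real.exp_ne_zero _)) (hpldpos (B y)).ne',
      Real.log_mul hK (Real.exp_ne_zero _), Real.log_exp, hB'app]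
    have : -‖y - A (B y)‖ ^ 2 / (2 * h) = -(2 * h)⁻¹ * (inner ℝ (R y) (R y) : ℝ) := by
      rw [real_inner_self_eq_norm_sq, ← hRy y]
      ring
    rw [this]
  have Hfinal : HasFDerivAt (fun y => Real.log (p y))
      ((-(2 * h)⁻¹) • ((fderivInnerCLM ℝ (R x, R x)).comp (R.prod R))
        + (InnerProductSpace.toDual ℝ _ G).comp B') x := by
    rw [hfunc]; exact Htot
  have hGrad := Hfinal.hasGradientAt
  have hL : ((-(2 * h)⁻¹) • ((fderivInnerCLM ℝ (R x, R x)).comp (R.prod R))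
        + (InnerProductSpace.toDual ℝ _ G).comp B')
      = InnerProductSpace.toDual ℝ (EuclideanSpace ℝ (Fin D))
          (A G - (1 / (1 - Real.exp (-t))) • (x - A (B x))) := by
    ext v
    have happly : (InnerProductSpace.toDual ℝ (EuclideanSpace ℝ (Fin D))
        (A G - (1 / (1 - Real.exp (-t))) • (x - A (B x)))) v
        = (inner ℝ (A G) v : ℝ) - (1 / (1 - Real.exp (-t))) * inner ℝ (x - A (B x)) v := by
      rw [InnerProductSpace.toDual_apply_apply, inner_sub_left, real_inner_smul_left]
    rw [ContinuousLinearMap.add_apply, happly]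
    have hRxv : (inner ℝ (R x) (R v) : ℝ) = inner ℝ (R x) v := by
      have hv : R v = v - A (B v) := (hRy v).symm
      rw [hv, inner_sub_right]
      have h0 : (inner ℝ (A (B v)) (R x) : ℝ) = 0 := by
        rw [← hRy x]; exact hABy x (B v)
      rw [real_inner_comm (A (B v)) (R x), h0, sub_zero]
    have hAGv : (inner ℝ (A G) v : ℝ) = inner ℝ G (B' v) := by
      rw [hB'app]; exact hGBv v G
    simp only [ContinuousLinearMap.coe_smul', Pi.smul_apply,
      ContinuousLinearMap.coe_comp', Function.comp_apply,
      ContinuousLinearMap.prod_apply, fderivInnerCLM_apply, smul_eq_mul,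
      InnerProductSpace.toDual_apply_apply]
    rw [hRxv, real_inner_comm (R x) (R v), hRxv]
    rw [← hAGv, ← hRy x, hh]
    have he : (1:ℝ) - Real.exp (-t) ≠ 0 := by rw [← hh]; exact hhpos.ne'
    set S : ℝ := inner ℝ (x - A (B x)) v with hS
    set T : ℝ := inner ℝ (A G) v with hT
    field_simp
    ring
  rw [hGrad.gradient, hL, LinearIsometryEquiv.symm_apply_apply]
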